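/- With ψ^k defined as in the standard extension formula from φ^0,…,φ^k (i.e. ψ^k(x,ξ) = |ξ|^{m−2k−1} Σ_{ℓ=0}^{k} (−1)^{k−ℓ} C(k,ℓ) |ξ|^ℓ ⟨ξ,x⟩^{k−ℓ} φ^ℓ(x − (⟨ξ,x⟩/|ξ|²)ξ, ξ/|ξ|)), one has the shift identity ψ^k(x+tξ, ξ) = Σ_{ℓ=0}^{k} C(k,ℓ)(−t)^{k−ℓ} ψ^ℓ(x,ξ) for every real t, every x ∈ ℝⁿ and every ξ ≠ 0. -/

import Mathlib

open scoped RealInnerProductSpace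

/-- The extension `ψ^k` of the data `(φ^0,…,φ^k)` to `ℝⁿ×(ℝⁿ∖{0})` (formula (1.14)):
`ψ^k(x,ξ) = |ξ|^{m−2k−1} Σ_{ℓ=0}^k (−1)^{k−ℓ} C(k,ℓ) |ξ|^ℓ ⟨ξ,x⟩^{k−ℓ}
  φ^ℓ(x − (⟨ξ,x⟩/|ξ|²)ξ, ξ/|ξ|)`. -/
noncomputable def psiExt (n m : ℕ)
    (φ : ℕ → EuclideanSpace ℝ (Fin n) × EuclideanSpace ℝ (Fin n) → ℝ) (k : ℕ) :
    EuclideanSpace ℝ (Fin n) × EuclideanSpace ℝ (Fin n) → ℝ :=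
  fun p => ‖p.2‖ ^ ((m : ℤ) - 2 * k - 1) *
    ∑ ℓ ∈ Finset.range (k + 1),
      (-1 : ℝ) ^ (k - ℓ) * (k.choose ℓ : ℝ) * ‖p.2‖ ^ ℓ * ⟪p.2, p.1⟫ ^ (k - ℓ) *
        φ ℓ (p.1 - (⟪p.2, p.1⟫ / ‖p.2‖ ^ 2) • p.2, ‖p.2‖⁻¹ • p.2)

/-- Statement 2.6 (second part): the extensions `ψ^k` satisfy the shift identity
`ψ^k(x+tξ,ξ) = Σ_{ℓ=0}^k C(k,ℓ) (−t)^{k−ℓ} ψ^ℓ(x,ξ)`. -/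
theorem stmt13 (n m : ℕ)
    (φ : ℕ → EuclideanSpace ℝ (Fin n) × EuclideanSpace ℝ (Fin n) → ℝ) :
    ∀ k ≤ m, ∀ (t : ℝ) (x ξ : EuclideanSpace ℝ (Fin n)), ξ ≠ 0 →
      psiExt n m φ k (x + t • ξ, ξ)
        = ∑ ℓ ∈ Finset.range (k + 1),
            (k.choose ℓ : ℝ) * (-t) ^ (k - ℓ) * psiExt n m φ ℓ (x, ξ) := by
  intro k _ t x ξ hξ
  have hr : (0:ℝ) < ‖ξ‖ := norm_pos_iff.mpr hξ
  have hr0 : (‖ξ‖ : ℝ) ≠ 0 := ne_of_gt hr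
  set r : ℝ := ‖ξ‖ with hrdef
  set s : ℝ := ⟪ξ, x⟫ with hsdef
  have hinner : (⟪ξ, x + t • ξ⟫ : ℝ) = s + t * r ^ 2 := by
    rw [inner_add_right, real_inner_smul_right, real_inner_self_eq_norm_sq]
  have hdiv : (s + t * r ^ 2) / r ^ 2 = s / r ^ 2 + t := by
    field_simp
  have hproj : (x + t • ξ) - ((s + t * r ^ 2) / r ^ 2) • ξ = x - (s / r ^ 2) • ξ := by
    rw [hdiv, add_smul]
    abel
  set Φ : ℕ → ℝ := fun ℓ => φ ℓ (x - (s / r ^ 2) • ξ, r⁻¹ • ξ) with hΦ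
  simp only [psiExt, hinner, ← hrdef, hproj]
  -- rewrite RHS as a double sum and swap
  have hRHS : ∑ ℓ ∈ Finset.range (k + 1),
      (k.choose ℓ : ℝ) * (-t) ^ (k - ℓ) *
        (r ^ ((m : ℤ) - 2 * ℓ - 1) *
          ∑ j ∈ Finset.range (ℓ + 1),
            (-1 : ℝ) ^ (ℓ - j) * (ℓ.choose j : ℝ) * r ^ j * s ^ (ℓ - j) * Φ j)
      = ∑ j ∈ Finset.range (k + 1), ∑ ℓ ∈ Finset.Ico j (k + 1),
          (k.choose ℓ : ℝ) * (-t) ^ (k - ℓ) *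
            (r ^ ((m : ℤ) - 2 * ℓ - 1) *
              ((-1 : ℝ) ^ (ℓ - j) * (ℓ.choose j : ℝ) * r ^ j * s ^ (ℓ - j) * Φ j)) := by
    simp only [Finset.mul_sum]
    exact Finset.sum_comm' (by intro ℓ j; simp [Finset.mem_range, Finset.mem_Ico]; omega)
  rw [hRHS, Finset.mul_sum]
  refine Finset.sum_congr rfl ?_
  intro j hj
  have hjk : j ≤ k := by simpa [Nat.lt_succ_iff] using hj
  -- expand (s + t r²)^(k-j) via the binomial theorem on the left
  rw [add_pow]
  rw [Finset.sum_Ico_eq_sum_range]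
  have hcard : k + 1 - j = k - j + 1 := by omega
  rw [hcard]
  simp only [Finset.mul_sum, Finset.sum_mul]
  refine Finset.sum_congr rfl ?_
  intro i hi
  have hik : i ≤ k - j := by simpa [Nat.lt_succ_iff] using hi
  have hji : j + i ≤ k := by omega
  -- simplify natural subtractions
  have h1 : j + i - j = i := by omega
  have h2 : k - (j + i) = k - j - i := by omega
  rw [h1, h2]
  -- key identities
  have hC : ((k.choose j : ℝ)) * ((k - j).choose i : ℝ)
      = (k.choose (j + i) : ℝ) * ((j + i).choose j : ℝ) := by
    have h := Nat.choose_mul (n := k) (Nat.le_add_right j i)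
    rw [h1] at h
    rw [← Nat.cast_mul, ← Nat.cast_mul, h]
  have hsign : ((-1 : ℝ)) ^ (k - j) = (-1 : ℝ) ^ (k - j - i) * (-1 : ℝ) ^ i := by
    rw [← pow_add]
    congr 1
    omega
  have hnegt : (-t : ℝ) ^ (k - j - i) = (-1 : ℝ) ^ (k - j - i) * t ^ (k - j - i) := by
    rw [neg_pow]
  have hrpow : r ^ ((m : ℤ) - 2 * ((j + i : ℕ) : ℤ) - 1)
      = r ^ ((m : ℤ) - 2 * k - 1) * (r ^ 2) ^ (k - j - i) := by
    rw [← pow_mul, ← zpow_natCast r (2 * (k - j - i)), ← zpow_add₀ hr0]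
    congr 1
    omega
  rw [hsign, hnegt, hrpow, mul_pow]
  -- now both sides are equal up to the choose identity hC
  push_cast at hC ⊢
  linear_combination (r ^ ((m : ℤ) - 2 * k - 1) * (-1 : ℝ) ^ (k - j - i) * (-1 : ℝ) ^ i *
    r ^ j * s ^ i * t ^ (k - j - i) * (r ^ 2) ^ (k - j - i) * Φ j) * hC
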